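/- Let F be a factorial monoid generated by its units together with s ≥ 2 pairwise non-associated prime elements p₁,…,p_s, and let H ⊆ F be finitely primary of rank s and exponent α, i.e., H∖H^× ⊆ p₁⋯p_s F and (p₁⋯p_s)^α F ⊆ H. Then for every i ∈ [1,s], the set of values v_{p_i}(u) as u ranges over the atoms of H is infinite. -/

import Mathlib

open scoped nonZeroDivisors

section MonoidDefs
variable {H B : Type*} [CommMonoid H] [CommMonoid B]

/-- The set of lengths of `a`: `{0}` for units, otherwise the set of `k` such that
`a` is a product of `k` atoms (irreducible elements). -/
def lengthsSet (a : H) : Set ℕ :=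
  {k | (IsUnit a ∧ k = 0) ∨
    (¬ IsUnit a ∧ ∃ l : Multiset H, Multiset.card l = k ∧ (∀ x ∈ l, Irreducible x) ∧ l.prod = a)}

/-- A transfer homomorphism: (T1) `B = θ(H)·B^×` and `θ⁻¹(B^×) = H^×`;
(T2) factorizations of `θ u` lift to factorizations of `u` up to associates. -/
def IsTransferHom (θ : H →* B) : Prop :=
  (∀ b : B, ∃ u : H, ∃ ε : Bˣ, b = θ u * ε) ∧
  (∀ u : H, IsUnit (θ u) → IsUnit u) ∧
  (∀ u : H, ∀ b c : B, θ u = b * c →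
    ∃ v w : H, u = v * w ∧ Associated (θ v) b ∧ Associated (θ w) c)

/-- A Krull monoid: a monoid admitting a divisor homomorphism into a
free abelian monoid. -/
def IsKrullMonoid (H : Type*) [CommMonoid H] : Prop :=
  ∃ (ι : Type) (d : H →* Multiplicative (ι →₀ ℕ)), ∀ a b : H, d a ∣ d b → a ∣ b

/-- Half-factorial: all factorizations of an element into atoms have the same length. -/
def IsHalfFactorial (A : Type*) [CommMonoid A] : Prop :=
  ∀ (a : A) (l m : Multiset A), (∀ x ∈ l, Irreducible x) → (∀ x ∈ m, Irreducible x) →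
    l.prod = a → m.prod = a → Multiset.card l = Multiset.card m

/-- An absolutely irreducible element: an atom all of whose powers factor uniquely
into atoms, up to associates. -/
def AbsolutelyIrreducible (a : H) : Prop :=
  Irreducible a ∧ ∀ n : ℕ, 0 < n → ∀ l m : Multiset H,
    (∀ x ∈ l, Irreducible x) → (∀ x ∈ m, Irreducible x) →
    l.prod = a ^ n → m.prod = a ^ n → Multiset.Rel Associated l m

end MonoidDefs

/-- A prime element of a monoid. -/
def IsPrimeElem {F : Type*} [CommMonoid F] (q : F) : Prop :=
  ¬ IsUnit q ∧ ∀ a b : F, q ∣ a * b → q ∣ a ∨ q ∣ b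

section Aux
variable {F : Type*} [CancelCommMonoid F]

lemma IsPrimeElem.not_dvd_unit {q x : F} (hq : IsPrimeElem q) (hx : IsUnit x) : ¬ q ∣ x :=
  fun h => hq.1 (isUnit_of_dvd_unit h hx)

lemma IsPrimeElem.dvd_of_dvd_prod {q : F} (hq : IsPrimeElem q) {ι : Type*} {t : Finset ι}
    {f : ι → F} (h : q ∣ ∏ j ∈ t, f j) : ∃ j ∈ t, q ∣ f j := by
  classical
  induction t using Finset.induction with
  | empty =>
      simp only [Finset.prod_empty] at h
      exact absurd (isUnit_of_dvd_unit h isUnit_one) hq.1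
  | @insert a t ha ih =>
      rw [Finset.prod_insert ha] at h
      rcases hq.2 _ _ h with h' | h'
      · exact ⟨a, Finset.mem_insert_self _ _, h'⟩
      · obtain ⟨j, hj, hdvd⟩ := ih h'
        exact ⟨j, Finset.mem_insert_of_mem hj, hdvd⟩

lemma IsPrimeElem.dvd_of_dvd_pow {q r : F} (hq : IsPrimeElem q) {n : ℕ}
    (h : q ∣ r ^ n) : q ∣ r := by
  induction n with
  | zero =>
      rw [pow_zero] at h
      exact absurd (isUnit_of_dvd_unit h isUnit_one) hq.1
  | succ n ih =>
      rw [pow_succ] at h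
      rcases hq.2 _ _ h with h' | h'
      · exact ih h'
      · exact h'

lemma pow_succ_dvd_cancel {q z : F} {m : ℕ} (h : q ^ (m + 1) ∣ q ^ m * z) : q ∣ z := by
  obtain ⟨c, hc⟩ := h
  have h2 : q ^ m * z = q ^ m * (q * c) := by rw [hc, pow_succ, mul_assoc]
  exact ⟨c, mul_left_cancel h2⟩

variable {s : ℕ} {p : Fin s → F} (hprime : ∀ i, IsPrimeElem (p i))
  (hnonassoc : ∀ i j, i ≠ j → ¬ Associated (p i) (p j))

include hprime hnonassoc in
lemma prime_not_dvd_prime {i j : Fin s} (hij : i ≠ j) : ¬ p i ∣ p j := by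
  rintro ⟨c, hc⟩
  rcases (hprime j).2 (p i) c (hc ▸ dvd_refl _) with h | h
  · -- p j ∣ p i, so associated
    obtain ⟨d, hd⟩ := h
    have h1 : p j * 1 = p j * (d * c) := by
      conv_lhs => rw [mul_one, hc, hd]
      rw [mul_assoc]
    have hdc : d * c = 1 := (mul_left_cancel h1).symm
    have hcu : IsUnit c := IsUnit.of_mul_eq_one (a := c) d (by rw [mul_comm]; exact hdc)
    obtain ⟨u, hu⟩ := hcu
    exact hnonassoc i j hij ⟨u, by rw [hu, ← hc]⟩
  · -- p j ∣ c
    obtain ⟨d, hd⟩ := h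
    have h1 : p j * 1 = p j * (p i * d) := by
      conv_lhs => rw [mul_one, hc, hd]
      rw [← mul_assoc, mul_comm (p i) (p j), mul_assoc]
    exact (hprime i).1 (IsUnit.of_mul_eq_one d (mul_left_cancel h1).symm)

include hprime hnonassoc in
lemma pow_dvd_rep_iff (ε : Fˣ) (a : Fin s → ℕ) (i : Fin s) (k : ℕ) :
    p i ^ k ∣ (ε : F) * ∏ j, p j ^ a j ↔ k ≤ a i := by
  constructor
  · intro h
    by_contra hk
    push_neg at hk
    have h1 : p i ^ (a i + 1) ∣ (ε : F) * ∏ j, p j ^ a j :=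
      dvd_trans (pow_dvd_pow _ hk) h
    have hsplit : (ε : F) * ∏ j, p j ^ a j
        = p i ^ a i * ((ε : F) * ∏ j ∈ Finset.univ.erase i, p j ^ a j) := by
      rw [← Finset.mul_prod_erase Finset.univ (fun j => p j ^ a j) (Finset.mem_univ i)]
      rw [← mul_assoc, mul_comm ((ε : F)) (p i ^ a i), mul_assoc]
    rw [hsplit] at h1
    have h2 : p i ∣ (ε : F) * ∏ j ∈ Finset.univ.erase i, p j ^ a j :=
      pow_succ_dvd_cancel h1
    rcases (hprime i).2 _ _ h2 with h3 | h3
    · exact (hprime i).not_dvd_unit ε.isUnit h3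
    · obtain ⟨j, hj, hdvd⟩ := (hprime i).dvd_of_dvd_prod h3
      have hji : i ≠ j := fun hh => (Finset.mem_erase.mp hj).1 hh.symm
      exact prime_not_dvd_prime hprime hnonassoc hji ((hprime i).dvd_of_dvd_pow hdvd)
  · intro h
    have h1 : p i ^ k ∣ p i ^ a i := pow_dvd_pow _ h
    have h2 : p i ^ a i ∣ ∏ j, p j ^ a j :=
      Finset.dvd_prod_of_mem (fun j => p j ^ a j) (Finset.mem_univ i)
    exact dvd_trans (dvd_trans h1 h2) (dvd_mul_left _ _)

variable {v : F → Fin s → ℕ} (hrep : ∀ x : F, ∃ ε : Fˣ, x = (ε : F) * ∏ i, p i ^ v x i)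

include hprime hnonassoc hrep in
lemma vchar (x : F) (i : Fin s) (k : ℕ) : p i ^ k ∣ x ↔ k ≤ v x i := by
  obtain ⟨ε, hε⟩ := hrep x
  have h := pow_dvd_rep_iff hprime hnonassoc ε (v x) i k
  rw [← hε] at h
  exact h

include hprime hnonassoc hrep in
lemma v_of_rep (ε : Fˣ) (c : Fin s → ℕ) (k : Fin s) :
    v ((ε : F) * ∏ j, p j ^ c j) k = c k := by
  have h1 : v ((ε : F) * ∏ j, p j ^ c j) k ≤ c k := by
    rw [← pow_dvd_rep_iff hprime hnonassoc ε c k]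
    exact (vchar hprime hnonassoc hrep _ k _).mpr le_rfl
  have h2 : c k ≤ v ((ε : F) * ∏ j, p j ^ c j) k := by
    rw [← vchar hprime hnonassoc hrep _ k]
    exact (pow_dvd_rep_iff hprime hnonassoc ε c k _).mpr le_rfl
  omega

include hprime hnonassoc hrep in
lemma v_unit {x : F} (hx : IsUnit x) (i : Fin s) : v x i = 0 := by
  by_contra h
  have h1 : p i ^ 1 ∣ x := (vchar hprime hnonassoc hrep x i 1).mpr (by omega)
  rw [pow_one] at h1
  exact (hprime i).not_dvd_unit hx h1

include hprime hnonassoc hrep in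
lemma v_mul (x y : F) (i : Fin s) : v (x * y) i = v x i + v y i := by
  have hx : p i ^ v x i ∣ x := (vchar hprime hnonassoc hrep x i _).mpr le_rfl
  have hy : p i ^ v y i ∣ y := (vchar hprime hnonassoc hrep y i _).mpr le_rfl
  obtain ⟨x', hx'⟩ := hx
  obtain ⟨y', hy'⟩ := hy
  have hx'' : ¬ p i ∣ x' := by
    rintro ⟨c, hc⟩
    have : p i ^ (v x i + 1) ∣ x := ⟨c, by
      conv_lhs => rw [hx', hc]
      rw [pow_succ, mul_assoc]⟩
    have := (vchar hprime hnonassoc hrep x i _).mp this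
    omega
  have hy'' : ¬ p i ∣ y' := by
    rintro ⟨c, hc⟩
    have : p i ^ (v y i + 1) ∣ y := ⟨c, by
      conv_lhs => rw [hy', hc]
      rw [pow_succ, mul_assoc]⟩
    have := (vchar hprime hnonassoc hrep y i _).mp this
    omega
  have hge : v x i + v y i ≤ v (x * y) i := by
    rw [← vchar hprime hnonassoc hrep _ i, pow_add]
    exact mul_dvd_mul ((vchar hprime hnonassoc hrep x i _).mpr le_rfl)
      ((vchar hprime hnonassoc hrep y i _).mpr le_rfl)
  have hle : v (x * y) i ≤ v x i + v y i := by
    by_contra h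
    push_neg at h
    have h1 : p i ^ (v x i + v y i + 1) ∣ x * y :=
      (vchar hprime hnonassoc hrep _ i _).mpr (by omega)
    have h2 : x * y = p i ^ (v x i + v y i) * (x' * y') := by
      conv_lhs => rw [hx', hy']
      rw [pow_add]
      rw [mul_mul_mul_comm]
    rw [h2] at h1
    rcases (hprime i).2 _ _ (pow_succ_dvd_cancel h1) with h3 | h3
    · exact hx'' h3
    · exact hy'' h3
  omega

end Aux

theorem finitely_primary_atoms_infinite_valuation {F : Type*} [CancelCommMonoid F]
    {s : ℕ} (hs : 2 ≤ s)
    (p : Fin s → F) (hprime : ∀ i, IsPrimeElem (p i))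
    (hnonassoc : ∀ i j, i ≠ j → ¬ Associated (p i) (p j))
    (v : F → Fin s → ℕ)
    (hrep : ∀ x : F, ∃ ε : Fˣ, x = (ε : F) * ∏ i, p i ^ v x i)
    (H : Submonoid F) {α : ℕ} (hα : 0 < α)
    (hH1 : ∀ x : ↥H, ¬ IsUnit x → (∏ i, p i) ∣ (x : F))
    (hH2 : ∀ y : F, (∏ i, p i) ^ α * y ∈ H)
    (i : Fin s) :
    {n : ℕ | ∃ u : ↥H, Irreducible u ∧ v (u : F) i = n}.Infinite := by
  classical
  -- choose j ≠ i
  obtain ⟨j, hj⟩ : ∃ j : Fin s, j ≠ i := by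
    by_cases h : i = ⟨0, by omega⟩
    · exact ⟨⟨1, by omega⟩, by rw [h]; exact Fin.ne_of_val_ne (by simp)⟩
    · exact ⟨⟨0, by omega⟩, fun hh => h hh.symm⟩
  -- nonunits of H have positive valuation everywhere
  have hone : ∀ (k : Fin s) (h : ↥H), ¬ IsUnit h → 1 ≤ v (h : F) k := by
    intro k h hu
    have hd : p k ∣ (h : F) :=
      dvd_trans (Finset.dvd_prod_of_mem p (Finset.mem_univ k)) (hH1 h hu)
    have := (vchar hprime hnonassoc hrep (h : F) k 1).mp (by rwa [pow_one])
    omega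
  -- valuation of multiset products
  have vsum : ∀ (k : Fin s) (l : Multiset ↥H),
      v ((l.prod : ↥H) : F) k = (l.map fun u : ↥H => v (u : F) k).sum := by
    intro k l
    induction l using Multiset.induction with
    | empty =>
        simp only [Multiset.prod_zero, Multiset.map_zero, Multiset.sum_zero]
        rw [OneMemClass.coe_one]
        exact v_unit hprime hnonassoc hrep isUnit_one k
    | cons a t ih =>
        simp only [Multiset.prod_cons, Multiset.map_cons, Multiset.sum_cons,
          Submonoid.coe_mul, v_mul hprime hnonassoc hrep, ih]
  -- atomicity
  have atomic : ∀ n : ℕ, ∀ h : ↥H, ¬ IsUnit h → v (h : F) j ≤ n →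
      ∃ l : Multiset ↥H, (∀ u ∈ l, Irreducible u) ∧ l.prod = h := by
    intro n
    induction n with
    | zero =>
        intro h hu hv
        have := hone j h hu
        omega
    | succ n ih =>
        intro h hu hv
        by_cases hirr : Irreducible h
        · exact ⟨{h}, by simpa using hirr, by simp⟩
        · rw [irreducible_iff, not_and_or] at hirr
          rcases hirr with h1 | h1
          · exact absurd hu (by simpa using h1)
          push_neg at h1
          obtain ⟨b, c', hbc, hb, hc⟩ := h1
          have hvb1 : 1 ≤ v (b : F) j := hone j b hb
          have hvc1 : 1 ≤ v (c' : F) j := hone j c' hc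
          have hsum : v (h : F) j = v (b : F) j + v (c' : F) j := by
            rw [hbc, Submonoid.coe_mul]
            exact v_mul hprime hnonassoc hrep _ _ j
          obtain ⟨l1, hl1, hp1⟩ := ih b hb (by omega)
          obtain ⟨l2, hl2, hp2⟩ := ih c' hc (by omega)
          refine ⟨l1 + l2, ?_, by rw [Multiset.prod_add, hp1, hp2, hbc]⟩
          intro u hu'
          rcases Multiset.mem_add.mp hu' with h' | h'
          · exact hl1 u h'
          · exact hl2 u h'
  -- card bound
  have cardle : ∀ l : Multiset ↥H, (∀ u ∈ l, 1 ≤ v (u : F) j) →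
      Multiset.card l ≤ (l.map fun u : ↥H => v (u : F) j).sum := by
    intro l
    induction l using Multiset.induction with
    | empty => simp
    | cons a t ih =>
        intro hall
        simp only [Multiset.map_cons, Multiset.sum_cons, Multiset.card_cons]
        have h1 := hall a (Multiset.mem_cons_self a t)
        have h2 := ih (fun u hu => hall u (Multiset.mem_cons_of_mem hu))
        omega
  -- key: atoms with arbitrarily large valuation at i
  have key : ∀ N : ℕ, ∃ u : ↥H, Irreducible u ∧ N < v (u : F) i := by
    intro N
    set c : Fin s → ℕ := fun k => α + if k = i then α * N else 0 with hc
    have hprodc : ∏ k, p k ^ c k = (∏ k, p k) ^ α * p i ^ (α * N) := by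
      have h1 : ∀ k, p k ^ c k = p k ^ α * (if k = i then p k ^ (α * N) else 1) := by
        intro k
        by_cases hk : k = i <;> simp [hc, hk, pow_add]
      rw [Finset.prod_congr rfl (fun k _ => h1 k), Finset.prod_mul_distrib,
        Finset.prod_pow, Finset.prod_ite_eq' Finset.univ i (fun k => p k ^ (α * N))]
      simp
    have hmem : (∏ k, p k) ^ α * p i ^ (α * N) ∈ H := hH2 _
    set u0 : ↥H := ⟨(∏ k, p k) ^ α * p i ^ (α * N), hmem⟩ with hu0
    have hu0c : (u0 : F) = (1 : Fˣ) * ∏ k, p k ^ c k := by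
      rw [hprodc]; simp [hu0]
    have hvals : ∀ k, v (u0 : F) k = c k := by
      intro k
      rw [hu0c]
      exact v_of_rep hprime hnonassoc hrep 1 c k
    have hnotunit : ¬ IsUnit u0 := by
      intro hun
      have : IsUnit (u0 : F) := hun.map H.subtype
      have h0 := v_unit hprime hnonassoc hrep this j
      rw [hvals j] at h0
      simp [hc, hj] at h0
      omega
    obtain ⟨l, hl, hlprod⟩ := atomic (v (u0 : F) j) u0 hnotunit le_rfl
    have hcard : Multiset.card l ≤ α := by
      have h1 := cardle l (fun u hu => hone j u ((hl u hu).not_isUnit))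
      rw [← vsum j l, hlprod, hvals j] at h1
      simp [hc, hj] at h1
      omega
    have hsumi : (l.map fun u : ↥H => v (u : F) i).sum = α + α * N := by
      rw [← vsum i l, hlprod, hvals i]
      simp [hc]
    by_contra hno
    push_neg at hno
    have hbd : ∀ x ∈ l.map (fun u : ↥H => v (u : F) i), x ≤ N := by
      intro x hx
      obtain ⟨u, hu, rfl⟩ := Multiset.mem_map.mp hx
      exact hno u (hl u hu)
    have := Multiset.sum_le_card_nsmul _ _ hbd
    rw [hsumi, Multiset.card_map, smul_eq_mul] at this
    have h2 : Multiset.card l * N ≤ α * N := Nat.mul_le_mul_right N hcard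
    omega
  -- conclude
  intro hfin
  obtain ⟨N, hN⟩ := hfin.bddAbove
  obtain ⟨u, hu, hvu⟩ := key N
  have : v (u : F) i ≤ N := hN ⟨u, hu, rfl⟩
  omega
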